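/- Fix x, ε ∈ (0,1). Set t₁ = xε/(1 − x(1−ε)), N₁(k) = 1 − k(1−x), N₂(k) = (1−ε)x + kεx and Z(k) = t₁·k·(1−x)·(N₁(k)² − N₂(k)²). Then Z has a unique maximizer k* on [0,1], given by k* = (2(1 − εx) − √((ε² + 3)x² − 2εx + 1)) / (3(1 − x − εx)) when εx ≠ 1 − x, and k* = 1/2 when εx = 1 − x. Moreover, k*, viewed as a function of (x, ε), is monotonically increasing in x and in ε, and k* ∈ (1/3, √3/3). -/

import Mathlib

private lemma psi_mono (r s : ℝ) (hr : 0 ≤ r) (hrs : r ≤ s) :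
    (1 + r) / (2 + Real.sqrt (1 + 3 * r ^ 2)) ≤
      (1 + s) / (2 + Real.sqrt (1 + 3 * s ^ 2)) := by
  have hs : 0 ≤ s := le_trans hr hrs
  obtain ⟨P, hP⟩ : ∃ P, P = Real.sqrt (1 + 3 * r ^ 2) := ⟨_, rfl⟩
  obtain ⟨Q, hQ⟩ : ∃ Q, Q = Real.sqrt (1 + 3 * s ^ 2) := ⟨_, rfl⟩
  rw [← hP, ← hQ]
  have hP0 : 0 ≤ P := hP ▸ Real.sqrt_nonneg _
  have hQ0 : 0 ≤ Q := hQ ▸ Real.sqrt_nonneg _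
  have hP2 : P ^ 2 = 1 + 3 * r ^ 2 := by rw [hP]; exact Real.sq_sqrt (by positivity)
  have hQ2 : Q ^ 2 = 1 + 3 * s ^ 2 := by rw [hQ]; exact Real.sq_sqrt (by positivity)
  have hPQ : 1 + 3 * r * s ≤ P * Q := by
    rw [hP, hQ, ← Real.sqrt_mul (by positivity)]
    rw [show (1:ℝ) + 3 * r * s = Real.sqrt ((1 + 3 * r * s) ^ 2) from
      (Real.sqrt_sq (by positivity)).symm]
    apply Real.sqrt_le_sqrt
    nlinarith [sq_nonneg (r - s)]
  have hP3 : 3 * r ≤ 2 * P := by nlinarith [sq_nonneg r]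
  have hQ3 : 3 * s ≤ 2 * Q := by nlinarith [sq_nonneg s]
  have hP1 : 1 ≤ P := by nlinarith
  have hQ1 : 1 ≤ Q := by nlinarith
  rw [div_le_div_iff₀ (by positivity) (by positivity)]
  have key : ((1 + s) * (2 + P) - (1 + r) * (2 + Q)) * (P + Q) =
      (s - r) * (2 * (P + Q) + P * Q + 1 - 3 * r - 3 * s - 3 * r * s) := by
    linear_combination (1 + s) * hP2 - (1 + r) * hQ2
  have hbr : 0 ≤ 2 * (P + Q) + P * Q + 1 - 3 * r - 3 * s - 3 * r * s := by
    linarith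
  have hnn : 0 ≤ ((1 + s) * (2 + P) - (1 + r) * (2 + Q)) * (P + Q) := by
    rw [key]; exact mul_nonneg (by linarith) hbr
  nlinarith [hnn]

private lemma kform (x ε : ℝ) (hx0 : 0 < x) (hx1 : x < 1) (hε0 : 0 < ε) (hε1 : ε < 1) :
    (if ε * x = 1 - x then (1:ℝ) / 2
      else (2 * (1 - ε * x) - Real.sqrt ((ε ^ 2 + 3) * x ^ 2 - 2 * ε * x + 1)) /
        (3 * (1 - x - ε * x)))
    = (1 + x / (1 - ε * x)) / (2 + Real.sqrt (1 + 3 * (x / (1 - ε * x)) ^ 2)) := by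
  have hv : 0 < 1 - ε * x := by nlinarith
  set v := 1 - ε * x with hvdef
  have hW : Real.sqrt ((ε ^ 2 + 3) * x ^ 2 - 2 * ε * x + 1) =
      Real.sqrt (v ^ 2 + 3 * x ^ 2) := by
    congr 1; rw [hvdef]; ring
  have hWv : Real.sqrt (v ^ 2 + 3 * x ^ 2) = v * Real.sqrt (1 + 3 * (x / v) ^ 2) := by
    rw [show v ^ 2 + 3 * x ^ 2 = v ^ 2 * (1 + 3 * (x / v) ^ 2) by
      field_simp]
    rw [Real.sqrt_mul (sq_nonneg v), Real.sqrt_sq hv.le]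
  set W := Real.sqrt (1 + 3 * (x / v) ^ 2) with hWdef
  have hW0 : 0 ≤ W := Real.sqrt_nonneg _
  have hW2 : W ^ 2 = 1 + 3 * (x / v) ^ 2 := Real.sq_sqrt (by positivity)
  split_ifs with h
  · -- ε x = 1 - x, i.e. v = x
    have hvx : v = x := by rw [hvdef]; linarith
    have : W = 2 := by
      rw [hWdef, hvx, div_self hx0.ne', show (1:ℝ) + 3 * (1:ℝ)^2 = 2^2 by norm_num,
        Real.sqrt_sq (by norm_num)]
    rw [this, hvx, div_self hx0.ne']
    norm_num
  · have hvx : v ≠ x := by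
      intro hc; apply h; rw [hvdef] at hc; linarith
    have h3 : 3 * (1 - x - ε * x) ≠ 0 := by
      intro hc; apply hvx; rw [hvdef]; linarith
    rw [hW, hWv]
    rw [div_eq_div_iff h3 (by positivity)]
    have hx2 : W ^ 2 * v ^ 2 = v ^ 2 + 3 * x ^ 2 := by
      rw [hW2]; field_simp
    have hgoal : (2 * v - v * W) * (2 + W) * v = (1 + x / v) * (3 * (1 - x - ε * x)) * v := by
      have h2 : (1 - x - ε * x) = v - x := by rw [hvdef]; ring
      rw [h2]
      have : (2 * v - v * W) * (2 + W) * v = (4 * v ^ 2 - W ^ 2 * v ^ 2) * v / v := by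
        field_simp; ring
      rw [this, hx2]
      field_simp
      ring
    exact mul_right_cancel₀ hv.ne' hgoal

set_option maxHeartbeats 2000000 in
theorem stmt13 (kstar : ℝ → ℝ → ℝ)
    (hkstar : ∀ x ε : ℝ, kstar x ε =
      if ε * x = 1 - x then 1 / 2
      else (2 * (1 - ε * x) - Real.sqrt ((ε ^ 2 + 3) * x ^ 2 - 2 * ε * x + 1)) /
        (3 * (1 - x - ε * x)))
    (x ε : ℝ) (hx : x ∈ Set.Ioo (0 : ℝ) 1) (hε : ε ∈ Set.Ioo (0 : ℝ) 1)
    (t₁ : ℝ) (ht₁ : t₁ = x * ε / (1 - x * (1 - ε)))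
    (N₁ N₂ Z : ℝ → ℝ)
    (hN₁ : ∀ k, N₁ k = 1 - k * (1 - x))
    (hN₂ : ∀ k, N₂ k = (1 - ε) * x + k * ε * x)
    (hZ : ∀ k, Z k = t₁ * k * (1 - x) * ((N₁ k) ^ 2 - (N₂ k) ^ 2)) :
    kstar x ε ∈ Set.Icc (0 : ℝ) 1 ∧
    (∀ k ∈ Set.Icc (0 : ℝ) 1, Z k ≤ Z (kstar x ε)) ∧
    (∀ k ∈ Set.Icc (0 : ℝ) 1, Z k = Z (kstar x ε) → k = kstar x ε) ∧
    (∀ x' ∈ Set.Ioo (0 : ℝ) 1, x ≤ x' → kstar x ε ≤ kstar x' ε) ∧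
    (∀ ε' ∈ Set.Ioo (0 : ℝ) 1, ε ≤ ε' → kstar x ε ≤ kstar x ε') ∧
    kstar x ε ∈ Set.Ioo (1 / 3 : ℝ) (Real.sqrt 3 / 3) := by
  obtain ⟨hx0, hx1⟩ := hx
  obtain ⟨hε0, hε1⟩ := hε
  have hεx : ε * x < 1 := by nlinarith
  obtain ⟨A, hAdef⟩ : ∃ A : ℝ, A = 1 + x - ε * x := ⟨_, rfl⟩
  obtain ⟨B, hBdef⟩ : ∃ B : ℝ, B = 1 - x - ε * x := ⟨_, rfl⟩
  have hA : 0 < A := by rw [hAdef]; nlinarith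
  have hAB : 0 < A + B := by rw [hAdef, hBdef]; nlinarith
  have hAmB : A - B = 2 * x := by rw [hAdef, hBdef]; ring
  have hargpos : 0 < (ε ^ 2 + 3) * x ^ 2 - 2 * ε * x + 1 := by
    nlinarith [sq_nonneg (1 - ε * x), sq_nonneg x]
  obtain ⟨D, hDdef⟩ : ∃ D : ℝ,
      D = Real.sqrt ((ε ^ 2 + 3) * x ^ 2 - 2 * ε * x + 1) := ⟨_, rfl⟩
  have hDpos : 0 < D := by rw [hDdef]; exact Real.sqrt_pos.mpr hargpos
  have hD2 : D ^ 2 = A ^ 2 - A * B + B ^ 2 := by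
    rw [hDdef, Real.sq_sqrt hargpos.le, hAdef, hBdef]; ring
  have hden : 0 < A + B + D := by linarith
  obtain ⟨m, hmdef⟩ : ∃ m : ℝ, m = A / (A + B + D) := ⟨_, rfl⟩
  have hmden : m * (A + B + D) = A := by
    rw [hmdef]; field_simp
  -- kstar x ε = m
  have hm : kstar x ε = m := by
    rw [hkstar]
    split_ifs with h
    · have hB0 : B = 0 := by rw [hBdef]; linarith
      have hDA : D = A := by
        rw [hDdef, show (ε ^ 2 + 3) * x ^ 2 - 2 * ε * x + 1 = A ^ 2 by
          rw [hAdef]; linear_combination (2 * x) * h]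
        exact Real.sqrt_sq hA.le
      rw [hmdef, hDA, hB0]
      rw [show A + 0 + A = 2 * A by ring]
      rw [eq_div_iff (by positivity)]
      ring
    · have hB0 : B ≠ 0 := by
        rw [hBdef]; intro hc; apply h; linarith
      rw [← hDdef, hmdef, div_eq_div_iff (by
          intro hc; apply hB0; rw [hBdef]; linarith) hden.ne']
      have e1 : 2 * (1 - ε * x) = A + B := by rw [hAdef, hBdef]; ring
      have e2 : 3 * (1 - x - ε * x) = 3 * B := by rw [hBdef]
      rw [e1, e2]
      linear_combination -hD2
  -- critical point equation
  have hcrit : 3 * B * m ^ 2 - 2 * (A + B) * m + A = 0 := by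
    have h2 : (3 * B * m ^ 2 - 2 * (A + B) * m + A) * (A + B + D) ^ 2 = 0 := by
      linear_combination (3 * B * (m * (A + B + D) + A) - 2 * (A + B) * (A + B + D)) * hmden
        + A * hD2
    have hne : (A + B + D) ^ 2 ≠ 0 := by positivity
    exact (mul_eq_zero.mp h2).resolve_right hne
  -- E endpoints positive
  have hE1 : 0 < A - 2 * B * m := by
    have hp : 0 < (A - 2 * B * m) * (A + B + D) := by
      have he : (A - 2 * B * m) * (A + B + D) = A * (A - B + D) := by
        linear_combination (-2 * B) * hmden
      rw [he]
      nlinarith [hAmB]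
    rcases mul_pos_iff.mp hp with ⟨h1, _⟩ | ⟨_, h2⟩
    · exact h1
    · linarith
  have hE0 : 0 < A + B - 2 * B * m := by
    have hp : 0 < (A + B - 2 * B * m) * (A + B + D) := by
      have he : (A + B - 2 * B * m) * (A + B + D) = A ^ 2 + B ^ 2 + (A + B) * D := by
        linear_combination (-2 * B) * hmden
      rw [he]
      nlinarith [sq_nonneg B, mul_pos hAB hDpos, sq_nonneg A]
    rcases mul_pos_iff.mp hp with ⟨h1, _⟩ | ⟨_, h2⟩
    · exact h1
    · linarith
  have hE : ∀ k ∈ Set.Icc (0:ℝ) 1, 0 < (A + B) - B * (k + 2 * m) := by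
    intro k hk
    obtain ⟨hk0, hk1⟩ := hk
    rcases le_or_gt B 0 with hB | hB
    · have : 0 ≤ -B * k := mul_nonneg (by linarith) hk0
      nlinarith
    · have : 0 ≤ B * (1 - k) := mul_nonneg hB.le (by linarith)
      nlinarith
  -- bounds
  have hlb : 1 / 3 < m := by
    have h2ABpos : 0 < 2 * A - B := by nlinarith
    have hDlt : D < 2 * A - B := by
      nlinarith [hD2, hDpos, mul_pos hA hx0, hAmB]
    rw [hmdef, lt_div_iff₀ hden]
    nlinarith
  have hub : m < Real.sqrt 3 / 3 := by
    obtain ⟨s3, hs3⟩ : ∃ s3 : ℝ, s3 = Real.sqrt 3 := ⟨_, rfl⟩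
    rw [← hs3]
    have hs3sq : s3 ^ 2 = 3 := by rw [hs3]; exact Real.sq_sqrt (by norm_num)
    have hs3pos : 0 < s3 := by rw [hs3]; exact Real.sqrt_pos.mpr (by norm_num)
    have hs3gt : 3 / 2 < s3 := by nlinarith
    have hkey : 3 * A < s3 * (A + B + D) := by
      rcases le_or_gt (3 * A - s3 * (A + B)) 0 with h | h
      · nlinarith [mul_pos hs3pos hDpos]
      · have hsq : (3 * A - s3 * (A + B)) ^ 2 < (s3 * D) ^ 2 := by
          nlinarith [hD2, hs3sq, mul_pos hA hAB, hs3gt]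
        nlinarith [mul_pos hs3pos hDpos]
    rw [hmdef, div_lt_div_iff₀ hden (by norm_num)]
    linarith
  have hm1 : m < 1 := by
    have h3 : Real.sqrt 3 < 3 := by
      nlinarith [Real.sq_sqrt (show (0:ℝ) ≤ 3 by norm_num), Real.sqrt_nonneg 3]
    linarith [hub]
  -- rewrite Z
  have ht1pos : 0 < t₁ := by
    rw [ht₁]
    apply div_pos (by positivity)
    nlinarith
  obtain ⟨c, hcdef⟩ : ∃ c : ℝ, c = t₁ * (1 - x) * (1 - x + ε * x) := ⟨_, rfl⟩
  have hcpos : 0 < c := by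
    rw [hcdef]
    apply mul_pos (mul_pos ht1pos (by linarith))
    nlinarith
  have hZ' : ∀ k, Z k = c * (k * (1 - k) * (A - B * k)) := by
    intro k
    rw [hZ, hN₁, hN₂, hcdef, hAdef, hBdef]
    ring
  have hident : ∀ k, m * (1 - m) * (A - B * m) - k * (1 - k) * (A - B * k) =
      (m - k) ^ 2 * ((A + B) - B * (k + 2 * m)) := by
    intro k
    linear_combination (m - k) * hcrit
  refine ⟨Set.mem_Icc.mpr ⟨by linarith, by linarith⟩, ?_, ?_, ?_, ?_,
    Set.mem_Ioo.mpr ⟨by linarith, by rw [hm]; exact hub⟩⟩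
  · intro k hk
    rw [hm, hZ', hZ']
    have h1 := hident k
    have h2 : 0 ≤ (m - k) ^ 2 * ((A + B) - B * (k + 2 * m)) :=
      mul_nonneg (sq_nonneg _) (hE k hk).le
    have h4 : c * (m * (1 - m) * (A - B * m)) - c * (k * (1 - k) * (A - B * k)) =
        c * ((m - k) ^ 2 * ((A + B) - B * (k + 2 * m))) := by
      rw [← h1]; ring
    nlinarith [mul_nonneg hcpos.le h2]
  · intro k hk heq
    rw [hm] at heq ⊢
    rw [hZ', hZ'] at heq
    have hg : k * (1 - k) * (A - B * k) = m * (1 - m) * (A - B * m) :=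
      mul_left_cancel₀ hcpos.ne' heq
    have h1 := hident k
    rw [← hg] at h1
    have h2 : (m - k) ^ 2 * ((A + B) - B * (k + 2 * m)) = 0 := by linarith
    have h3 : (m - k) ^ 2 = 0 := by
      rcases mul_eq_zero.mp h2 with h | h
      · exact h
      · exact absurd h (hE k hk).ne'
    have h5 : m - k = 0 := sq_eq_zero_iff.mp h3
    linarith
  · -- monotone in x
    intro x' hx' hxx'
    obtain ⟨hx'0, hx'1⟩ := hx'
    rw [hkstar, hkstar, kform x ε hx0 hx1 hε0 hε1, kform x' ε hx'0 hx'1 hε0 hε1]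
    apply psi_mono
    · exact div_nonneg hx0.le (by nlinarith)
    · rw [div_le_div_iff₀ (by nlinarith) (by nlinarith)]
      nlinarith
  · -- monotone in ε
    intro ε' hε' hεε'
    obtain ⟨hε'0, hε'1⟩ := hε'
    rw [hkstar, hkstar, kform x ε hx0 hx1 hε0 hε1, kform x ε' hx0 hx1 hε'0 hε'1]
    apply psi_mono
    · exact div_nonneg hx0.le (by nlinarith)
    · rw [div_le_div_iff₀ (by nlinarith) (by nlinarith)]
      nlinarith
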